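/- arXiv:1812.11469 — 2 statements merged into one kernel-verified Lean document; each statement's English description precedes it below -/
import Mathlib

section
/- Let A be a solvable polynomial algebra with admissible system (B, ≺) which is an ℕ-filtered algebra of (B, d)-type for a positive-degree function d. Define ≺_gr on B by: a^α ≺_gr a^β iff d(a^α) < d(a^β), or d(a^α) = d(a^β) and a^α ≺ a^β. Then (B, ≺_gr) is again an admissible system for A (i.e., ≺_gr is a monomial ordering satisfying the solvability condition), and ≺_gr is a graded monomial ordering with respect to d. -/
/-- Proposition 4.2, (ii) ⟹ (i): `A` is a solvable polynomial
algebra with admissible system `(B, ≺)` (`prec` a monomial ordering, with the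
solvability condition on products of basis monomials), and `A` is `ℕ`-filtered
of `(B,d)`-type for the positive-degree function `d(a^α) = Σ αᵢmᵢ` (products
of basis monomials expand with terms of degree `≤` the sum of the degrees).
Define `a^α ≺_gr a^β` iff `d(a^α) < d(a^β)`, or `d(a^α) = d(a^β)` and
`a^α ≺ a^β`.  Then `(B, ≺_gr)` is again an admissible system for `A`:
`≺_gr` is a monomial ordering (well-order, `0` least, compatible with
addition) satisfying the solvability condition, and `≺_gr` is a graded
monomial ordering with respect to `d`. -/
theorem stmt_18 (n : ℕ) (m : Fin n → ℕ) (hm : ∀ i, 0 < m i)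
    (d : (Fin n → ℕ) → ℕ) (hd : ∀ α, d α = ∑ i, α i * m i)
    (K : Type*) [Field K] (A : Type*) [Ring A] [Algebra K A]
    (b : Module.Basis (Fin n → ℕ) K A)
    (prec : (Fin n → ℕ) → (Fin n → ℕ) → Prop)
    (hwo : IsWellOrder (Fin n → ℕ) prec)
    (hzero : ∀ α : Fin n → ℕ, α = 0 ∨ prec 0 α)
    (hadd : ∀ α β γ : Fin n → ℕ, prec α β → prec (α + γ) (β + γ))
    (hsolv : ∀ α β : Fin n → ℕ,
      (b.repr (b α * b β)) (α + β) ≠ 0 ∧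
      ∀ γ ∈ (b.repr (b α * b β)).support, γ ≠ α + β → prec γ (α + β))
    (hfilt : ∀ α β : Fin n → ℕ,
      ∀ γ ∈ (b.repr (b α * b β)).support, d γ ≤ d α + d β) :
    IsWellOrder (Fin n → ℕ) (fun α β => d α < d β ∨ (d α = d β ∧ prec α β)) ∧
    (∀ α : Fin n → ℕ, α = 0 ∨ (d 0 < d α ∨ (d 0 = d α ∧ prec 0 α))) ∧
    (∀ α β γ : Fin n → ℕ, (d α < d β ∨ (d α = d β ∧ prec α β)) →
      (d (α + γ) < d (β + γ) ∨ (d (α + γ) = d (β + γ) ∧ prec (α + γ) (β + γ)))) ∧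
    (∀ α β : Fin n → ℕ,
      (b.repr (b α * b β)) (α + β) ≠ 0 ∧
      ∀ γ ∈ (b.repr (b α * b β)).support, γ ≠ α + β →
        (d γ < d (α + β) ∨ (d γ = d (α + β) ∧ prec γ (α + β)))) ∧
    (∀ α β : Fin n → ℕ, (d α < d β ∨ (d α = d β ∧ prec α β)) → d α ≤ d β) := by
  have dadd : ∀ α γ : Fin n → ℕ, d (α + γ) = d α + d γ := by
    intro α γ
    simp only [hd, Pi.add_apply, add_mul, Finset.sum_add_distrib]
  refine ⟨?_, ?_, ?_, ?_, ?_⟩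
  · have hwf : WellFounded (fun α β : Fin n → ℕ =>
        d α < d β ∨ (d α = d β ∧ prec α β)) := by
      have h := InvImage.wf (fun α : Fin n → ℕ => ((d α, α) : ℕ ×ₗ (Fin n → ℕ)))
        (WellFounded.prod_lex (Nat.lt_wfRel.wf) hwo.wf)
      refine Subrelation.wf (r := InvImage (Prod.Lex Nat.lt prec)
        (fun α : Fin n → ℕ => ((d α, α) : ℕ ×ₗ (Fin n → ℕ)))) ?_ h
      intro α β hab
      rcases hab with h1 | ⟨h1, h2⟩
      · exact Prod.Lex.left _ _ h1
      · show Prod.Lex Nat.lt prec (d α, α) (d β, β)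
        rw [h1]
        exact Prod.Lex.right _ h2
    refine { trichotomous := ?_, wf := hwf }
    · intro α β
      suffices H : (d α < d β ∨ (d α = d β ∧ prec α β)) ∨ α = β ∨
          (d β < d α ∨ (d β = d α ∧ prec β α)) by
        intro h1 h2; tauto
      haveI := hwo
      rcases lt_trichotomy (d α) (d β) with h | h | h
      · exact Or.inl (Or.inl h)
      · rcases trichotomous_of prec α β with h2 | h2 | h2
        · exact Or.inl (Or.inr ⟨h, h2⟩)
        · exact Or.inr (Or.inl h2)
        · exact Or.inr (Or.inr (Or.inr ⟨h.symm, h2⟩))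
      · exact Or.inr (Or.inr (Or.inl h))
  · intro α
    rcases hzero α with h | h
    · exact Or.inl h
    · rcases lt_or_eq_of_le (show d 0 ≤ d α from by
        simp only [hd]
        exact Finset.sum_le_sum (fun i _ => Nat.mul_le_mul_right _ (Nat.zero_le _))) with h1 | h1
      · exact Or.inr (Or.inl h1)
      · exact Or.inr (Or.inr ⟨h1, h⟩)
  · intro α β γ h
    rcases h with h | ⟨h1, h2⟩
    · exact Or.inl (by rw [dadd, dadd]; omega)
    · exact Or.inr ⟨by rw [dadd, dadd, h1], hadd _ _ _ h2⟩
  · intro α β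
    refine ⟨(hsolv α β).1, ?_⟩
    intro γ hγ hne
    have h1 := hfilt α β γ hγ
    rcases lt_or_eq_of_le (by rw [dadd]; exact h1 : d γ ≤ d (α + β)) with h2 | h2
    · exact Or.inl h2
    · exact Or.inr ⟨h2, (hsolv α β).2 γ hγ hne⟩
  · intro α β h
    rcases h with h | ⟨h, _⟩
    · exact le_of_lt h
    · exact le_of_eq h
end

section
/- Let A be an ℕ-filtered solvable polynomial algebra of (B, d)-type with graded monomial ordering ≺_gr, and let f = λ a^α + Σⱼ μⱼ a^{α(j)} be nonzero with d(f) = p and leading monomial LM(f) = a^α (with respect to ≺_gr). Then the principal symbol satisfies σ(f) = λ σ(a)^α + Σ_{d(a^{α(j)}) = p} μⱼ σ(a)^{α(j)} in G(A), and LM(σ(f)) = σ(a)^α = σ(LM(f)) with respect to the induced ordering on σ(B). -/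
/-- Lemma 4.4(b): `A` is an `ℕ`-filtered solvable polynomial
algebra of `(B,d)`-type with admissible system `(B, ≺)` and graded monomial
ordering `≺_gr` (graded refinement of `≺` by `d`).  The associated graded
algebra `G(A)` is modeled by `G` via linear maps `φ p : F_pA → G` with
kernels `F_{p-1}A`, multiplicative; `G(A)` has PBW basis
`σ(B) = {σ(a)^α = φ (d α) (a^α)}`, given here as the basis `c` of `G`, with
the induced ordering `σ(a)^α ≺_{G(A)} σ(a)^β ↔ a^α ≺_gr a^β`.  For nonzero
`f` with `d(f) = p` and leading monomial `LM(f) = a^{α₀}` w.r.t. `≺_gr`: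
the principal symbol is `σ(f) = Σ_{d(α(j)) = p} μⱼ σ(a)^{α(j)}` (the image of
the terms of top degree), and `LM(σ(f)) = σ(a)^{α₀} = σ(LM(f))`, i.e. `α₀` is
the `≺_gr`-greatest element of the support of `σ(f)` in the basis `σ(B)`. -/
theorem stmt_19 (n : ℕ) (m : Fin n → ℕ) (hm : ∀ i, 0 < m i)
    (d : (Fin n → ℕ) → ℕ) (hd : ∀ α, d α = ∑ i, α i * m i)
    (K : Type*) [Field K] (A : Type*) [Ring A] [Algebra K A]
    (G : Type*) [Ring G] [Algebra K G]
    (b : Module.Basis (Fin n → ℕ) K A)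
    (prec : (Fin n → ℕ) → (Fin n → ℕ) → Prop)
    (hwo : IsWellOrder (Fin n → ℕ) prec)
    (hzero : ∀ α : Fin n → ℕ, α = 0 ∨ prec 0 α)
    (hadd : ∀ α β γ : Fin n → ℕ, prec α β → prec (α + γ) (β + γ))
    (hsolv : ∀ α β : Fin n → ℕ,
      (b.repr (b α * b β)) (α + β) ≠ 0 ∧
      ∀ γ ∈ (b.repr (b α * b β)).support, γ ≠ α + β →
        (d γ < d (α + β) ∨ (d γ = d (α + β) ∧ prec γ (α + β))))
    (F : ℕ → Submodule K A)
    (hF : ∀ p, F p = Submodule.span K (b '' {α : Fin n → ℕ | d α ≤ p}))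
    (hmono : Monotone F)
    (hFmul : ∀ p q : ℕ, ∀ x ∈ F p, ∀ y ∈ F q, x * y ∈ F (p + q))
    (hbmemF : ∀ (γ : Fin n → ℕ) (p : ℕ), d γ ≤ p → b γ ∈ F p)
    (φ : ∀ p : ℕ, F p →ₗ[K] G)
    (hker : ∀ p : ℕ, ∀ x : F p,
      φ p x = 0 ↔ ((p ≠ 0 ∧ (x : A) ∈ F (p - 1)) ∨ (p = 0 ∧ (x : A) = 0)))
    (hφmul : ∀ (p q : ℕ) (x y : A) (hx : x ∈ F p) (hy : y ∈ F q),
      φ (p + q) ⟨x * y, hFmul p q x hx y hy⟩ = φ p ⟨x, hx⟩ * φ q ⟨y, hy⟩)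
    (c : Module.Basis (Fin n → ℕ) K G)
    (hc : ∀ α : Fin n → ℕ, c α = φ (d α) ⟨b α, hbmemF α (d α) le_rfl⟩)
    (f : A) (hf : f ≠ 0)
    (p : ℕ) (hp : p = (b.repr f).support.sup d) (hfF : f ∈ F p)
    (α₀ : Fin n → ℕ) (hα₀ : α₀ ∈ (b.repr f).support)
    (hLM : ∀ γ ∈ (b.repr f).support, γ ≠ α₀ →
      (d γ < d α₀ ∨ (d γ = d α₀ ∧ prec γ α₀))) :
    (φ p ⟨f, hfF⟩ =
      ∑ γ ∈ ((b.repr f).support.filter fun γ => d γ = p).attach,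
        (b.repr f) γ.1 •
          φ p ⟨b γ.1, hbmemF γ.1 p (le_of_eq (Finset.mem_filter.mp γ.2).2)⟩) ∧
    α₀ ∈ (c.repr (φ p ⟨f, hfF⟩)).support ∧
    (∀ γ ∈ (c.repr (φ p ⟨f, hfF⟩)).support, γ ≠ α₀ →
      (d γ < d α₀ ∨ (d γ = d α₀ ∧ prec γ α₀))) := by
  classical
  set S := (b.repr f).support with hS
  have hdle : ∀ γ ∈ S, d γ ≤ p := fun γ hγ => hp ▸ Finset.le_sup hγ
  have hdα₀ : d α₀ = p := by
    refine le_antisymm (hdle _ hα₀) ?_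
    rw [hp]
    refine Finset.sup_le fun γ hγ => ?_
    by_cases h : γ = α₀
    · exact le_of_eq (h ▸ rfl)
    · rcases hLM γ hγ h with h1 | h1
      · exact h1.le
      · exact h1.1.le
  set T := S.filter (fun γ => d γ = p) with hT
  have hTS : T ⊆ S := Finset.filter_subset _ _
  -- decomposition of f
  have hfeq : f = (∑ γ ∈ T, b.repr f γ • b γ) + ∑ γ ∈ S \ T, b.repr f γ • b γ := by
    rw [add_comm, Finset.sum_sdiff hTS]
    conv_lhs => rw [← b.linearCombination_repr f]
    rw [Finsupp.linearCombination_apply, Finsupp.sum]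
  have htopmem : (∑ γ ∈ T, b.repr f γ • b γ) ∈ F p := by
    refine Submodule.sum_mem _ fun γ hγ => Submodule.smul_mem _ _ ?_
    exact hbmemF γ p (le_of_eq (Finset.mem_filter.mp hγ).2)
  have hlowmem : (∑ γ ∈ S \ T, b.repr f γ • b γ) ∈ F p := by
    refine Submodule.sum_mem _ fun γ hγ => Submodule.smul_mem _ _ ?_
    exact hbmemF γ p (hdle γ (Finset.mem_sdiff.mp hγ).1)
  have hsub : (⟨f, hfF⟩ : F p) = ⟨_, htopmem⟩ + ⟨_, hlowmem⟩ := Subtype.ext hfeq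
  have hlow0 : φ p ⟨_, hlowmem⟩ = 0 := by
    by_cases hp0 : p = 0
    · have hempty : S \ T = ∅ := by
        rw [Finset.sdiff_eq_empty_iff_subset]
        intro γ hγ
        refine Finset.mem_filter.mpr ⟨hγ, ?_⟩
        have := hdle γ hγ
        omega
      rw [(hker p _).2]
      right
      refine ⟨hp0, ?_⟩
      simp [hempty]
    · rw [(hker p _).2]
      left
      refine ⟨hp0, ?_⟩
      refine Submodule.sum_mem _ fun γ hγ => Submodule.smul_mem _ _ ?_
      rcases Finset.mem_sdiff.mp hγ with ⟨hγS, hγT⟩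
      have h1 := hdle γ hγS
      have h2 : d γ ≠ p := fun h => hγT (Finset.mem_filter.mpr ⟨hγS, h⟩)
      exact hbmemF γ (p - 1) (by omega)
  have htopsum : (⟨_, htopmem⟩ : F p) =
      ∑ γ ∈ T.attach, (b.repr f) γ.1 •
        (⟨b γ.1, hbmemF γ.1 p (le_of_eq (Finset.mem_filter.mp γ.2).2)⟩ : F p) := by
    apply Subtype.ext
    push_cast
    rw [← Finset.sum_attach T (fun γ => b.repr f γ • b γ)]
  have hmain : φ p ⟨f, hfF⟩ =
      ∑ γ ∈ T.attach, (b.repr f) γ.1 •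
        φ p ⟨b γ.1, hbmemF γ.1 p (le_of_eq (Finset.mem_filter.mp γ.2).2)⟩ := by
    rw [hsub, map_add, hlow0, add_zero, htopsum, map_sum]
    simp only [map_smul]
  refine ⟨hmain, ?_, ?_⟩
  all_goals {
    have hcγ : ∀ (γ : Fin n → ℕ) (hγ : d γ = p)
        (h : b γ ∈ F p), φ p ⟨b γ, h⟩ = c γ := by
      intro γ hγ h
      subst hγ
      rw [hc]
    have hX : φ p ⟨f, hfF⟩ = ∑ γ ∈ T, b.repr f γ • c γ := by
      rw [hmain, ← Finset.sum_attach T (fun γ => b.repr f γ • c γ)]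
      refine Finset.sum_congr rfl fun γ _ => ?_
      rw [hcγ γ.1 (Finset.mem_filter.mp γ.2).2]
    have hval : ∀ δ, c.repr (φ p ⟨f, hfF⟩) δ = if δ ∈ T then b.repr f δ else 0 := by
      intro δ
      rw [hX, map_sum]
      simp only [map_smul, Module.Basis.repr_self, Finsupp.coe_finset_sum, Finset.sum_apply,
        Finsupp.smul_apply, Finsupp.single_apply, smul_eq_mul, mul_ite, mul_one, mul_zero]
      rw [Finset.sum_ite_eq' T δ (fun δ => b.repr f δ)]
    first
    | · rw [Finsupp.mem_support_iff, hval]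
        have hα₀T : α₀ ∈ T := Finset.mem_filter.mpr ⟨hα₀, hdα₀⟩
        rw [if_pos hα₀T]
        exact Finsupp.mem_support_iff.mp hα₀
    | · intro γ hγ hne
        rw [Finsupp.mem_support_iff, hval] at hγ
        by_cases hγT : γ ∈ T
        · exact hLM γ (hTS hγT) hne
        · rw [if_neg hγT] at hγ; exact absurd rfl hγ
  }
end
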